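/- Let U = U₀ exp(αX) be an approximate joint triangularizer of the observed matrices {M̂_n} (U₀ an exact joint triangularizer of {M_n}, X skew-symmetric with ‖X‖ = 1, α ≥ 0), and define the estimated eigenvalues λ̂_i(M̂_n) = [Uᵀ M̂_n U]_{ii} and the exact eigenvalues λ_i(M_n) = [U₀ᵀ M_n U₀]_{ii}. Then there is a constant C > 0 depending only on the M_n such that for all n = 1,…,N and i = 1,…,d: |λ̂_i(M̂_n) − λ_i(M_n)| ≤ 2α‖M_n‖ + σ‖W_n‖ + C α². -/

import Mathlib

open Matrix Kronecker BigOperators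

noncomputable section

/-- Square real matrices. -/
abbrev Mat (d : ℕ) := Matrix (Fin d) (Fin d) ℝ

/-- Strictly lower-triangular part: `[low A]_{ij} = A_{ij}` if `i > j`, else `0`. -/
def lowPart {d : ℕ} (A : Mat d) : Mat d :=
  Matrix.of fun i j => if (j : ℕ) < (i : ℕ) then A i j else 0

/-- Frobenius norm. -/
def frob {m n : Type*} [Fintype m] [Fintype n] (A : Matrix m n ℝ) : ℝ :=
  Real.sqrt (∑ i, ∑ j, (A i j) ^ 2)

/-- Euclidean norm of a vector. -/
def enorm' {m : Type*} [Fintype m] (v : m → ℝ) : ℝ :=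
  Real.sqrt (∑ i, (v i) ^ 2)

/-- Largest singular value. -/
def sigMax {m n : Type*} [Fintype m] [Fintype n] (A : Matrix m n ℝ) : ℝ :=
  sSup {r | ∃ x : n → ℝ, enorm' x = 1 ∧ r = enorm' (A.mulVec x)}

/-- Smallest singular value. -/
def sigMin {m n : Type*} [Fintype m] [Fintype n] (A : Matrix m n ℝ) : ℝ :=
  sInf {r | ∃ x : n → ℝ, enorm' x = 1 ∧ r = enorm' (A.mulVec x)}

/-- Spectral norm (largest singular value). -/
def specNorm {m n : Type*} [Fintype m] [Fintype n] (A : Matrix m n ℝ) : ℝ := sigMax A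

/-- Condition number `κ(A) = σ_max(A)/σ_min(A)`. -/
def condNum {m n : Type*} [Fintype m] [Fintype n] (A : Matrix m n ℝ) : ℝ :=
  sigMax A / sigMin A

/-- Matrix exponential. -/
def matExp {d : ℕ} (A : Mat d) : Mat d := ∑' k : ℕ, ((k.factorial : ℝ))⁻¹ • A ^ k

/-- Column-wise vectorization: index `(j, i)` holds the `(i, j)` entry. -/
def vecM {d : ℕ} (A : Mat d) : Fin d × Fin d → ℝ := fun p => A p.2 p.1

/-- Inverse of the column-wise vectorization. -/
def matM {d : ℕ} (v : Fin d × Fin d → ℝ) : Mat d := Matrix.of fun i j => v (j, i)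

/-- The `d² × d²` diagonal 0/1 matrix `Low` with `Low (vec A) = vec (low A)`. -/
def lowOp (d : ℕ) : Matrix (Fin d × Fin d) (Fin d × Fin d) ℝ :=
  Matrix.diagonal fun p => if (p.1 : ℕ) < (p.2 : ℕ) then 1 else 0

/-- `P` is a valid `P_low` projector: `P Pᵀ = 1` and `Pᵀ P = Low`. -/
def IsPlow {d k : ℕ} (P : Matrix (Fin k) (Fin d × Fin d) ℝ) : Prop :=
  P * Pᵀ = 1 ∧ Pᵀ * P = lowOp d

/-- Orthogonal matrix. -/
def IsOrtho {d : ℕ} (U : Mat d) : Prop := Uᵀ * U = 1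

/-- Skew-symmetric matrix. -/
def IsSkew {d : ℕ} (X : Mat d) : Prop := Xᵀ = -X

/-- Matrix commutator. -/
def mcomm {d : ℕ} (A B : Mat d) : Mat d := A * B - B * A

/-- `U₀` is an exact joint triangularizer of the family `M`. -/
def ExactTriang {d N : ℕ} (U₀ : Mat d) (M : Fin N → Mat d) : Prop :=
  IsOrtho U₀ ∧ ∀ n, lowPart (U₀ᵀ * M n * U₀) = 0

/-- The joint triangularization loss `L(U) = Σₙ ‖low(Uᵀ M̂ₙ U)‖²`. -/
def Loss {d N : ℕ} (Mh : Fin N → Mat d) (U : Mat d) : ℝ :=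
  ∑ n, (frob (lowPart (Uᵀ * Mh n * U))) ^ 2

/-- Stationary point of the loss on the orthogonal group: the Riemannian
gradient vanishes, i.e. all directional derivatives along skew directions vanish. -/
def IsStationary' {d N : ℕ} (Mh : Fin N → Mat d) (U : Mat d) : Prop :=
  IsOrtho U ∧ ∀ X : Mat d, IsSkew X →
    deriv (fun t : ℝ => Loss Mh (U * matExp (t • X))) 0 = 0

/-- The operator `t̃ = P_low (1 ⊗ Aᵀ − A ⊗ 1) P_lowᵀ`. -/
def ttil {d k : ℕ} (P : Matrix (Fin k) (Fin d × Fin d) ℝ) (A : Mat d) :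
    Matrix (Fin k) (Fin k) ℝ :=
  P * ((1 : Mat d) ⊗ₖ Aᵀ - A ⊗ₖ (1 : Mat d)) * Pᵀ

/-- The joint eigengap `γ = min_{i<i'} Σₙ (Λ_{ni} − Λ_{ni'})²`. -/
def gapMin {d N : ℕ} (Λ : Fin N → Fin d → ℝ) : ℝ :=
  sInf {r | ∃ i i' : Fin d, i < i' ∧ r = ∑ n, (Λ n i - Λ n i') ^ 2}

section AuxFrob

open NormedSpace

attribute [local instance] Matrix.frobeniusSeminormedAddCommGroup
  Matrix.frobeniusNormedAddCommGroup Matrix.frobeniusNormedRing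
  Matrix.frobeniusNormedSpace Matrix.frobeniusNormedAlgebra

variable {d : ℕ}

lemma frob_eq_norm (A : Mat d) : frob A = ‖A‖ := by
  rw [Matrix.frobenius_norm_def, frob, Real.sqrt_eq_rpow]
  congr 1
  refine Finset.sum_congr rfl fun i _ => Finset.sum_congr rfl fun j _ => ?_
  rw [Real.rpow_two, Real.norm_eq_abs, sq_abs]

lemma abs_entry_le_norm (A : Mat d) (i j : Fin d) : |A i j| ≤ ‖A‖ := by
  rw [← frob_eq_norm, frob, ← Real.sqrt_sq_eq_abs]
  apply Real.sqrt_le_sqrt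
  calc (A i j) ^ 2 ≤ ∑ j', (A i j') ^ 2 :=
        Finset.single_le_sum (f := fun j' => (A i j') ^ 2)
          (fun _ _ => sq_nonneg _) (Finset.mem_univ j)
    _ ≤ ∑ i', ∑ j', (A i' j') ^ 2 :=
        Finset.single_le_sum (f := fun i' => ∑ j', (A i' j') ^ 2)
          (fun i' _ => Finset.sum_nonneg fun _ _ => sq_nonneg _) (Finset.mem_univ i)

lemma sumsq_eq_trace (B : Mat d) : ∑ i, ∑ j, (B i j) ^ 2 = Matrix.trace (Bᵀ * B) := by
  rw [Matrix.trace, Finset.sum_comm]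
  refine Finset.sum_congr rfl fun j _ => ?_
  simp [Matrix.mul_apply, Matrix.diag, sq]

lemma norm_conj_ortho {U : Mat d} (hU : Uᵀ * U = 1) (A : Mat d) : ‖Uᵀ * A * U‖ = ‖A‖ := by
  have hU' : U * Uᵀ = 1 := mul_eq_one_comm.mp hU
  rw [← frob_eq_norm, ← frob_eq_norm, frob, frob]
  congr 1
  rw [sumsq_eq_trace, sumsq_eq_trace]
  have h1 : (Uᵀ * A * U)ᵀ * (Uᵀ * A * U) = Uᵀ * (Aᵀ * A) * U := by
    have : (Uᵀ * A * U)ᵀ = Uᵀ * Aᵀ * U := by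
      simp [Matrix.transpose_mul, Matrix.mul_assoc]
    rw [this]
    calc Uᵀ * Aᵀ * U * (Uᵀ * A * U) = Uᵀ * Aᵀ * (U * Uᵀ) * A * U := by
          simp only [Matrix.mul_assoc]
      _ = Uᵀ * (Aᵀ * A) * U := by rw [hU']; simp only [Matrix.mul_assoc, Matrix.one_mul]
  rw [h1, ← Matrix.mul_assoc, Matrix.trace_mul_cycle, ← Matrix.mul_assoc, hU',
    Matrix.one_mul]

lemma matExp_eq_exp (A : Mat d) : matExp A = exp A := by
  rw [exp_eq_tsum ℝ, matExp]

lemma matExp_ortho {X : Mat d} (hX : IsSkew X) (α : ℝ) :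
    (matExp (α • X))ᵀ * matExp (α • X) = 1 := by
  have hT : (α • X)ᵀ = -(α • X) := by
    rw [Matrix.transpose_smul, hX, smul_neg]
  have h1 : (matExp (α • X))ᵀ = matExp (-(α • X)) := by
    rw [← hT, matExp_eq_exp, matExp_eq_exp]
    exact (Matrix.exp_transpose _).symm
  have h2 : matExp (-(α • X)) * matExp (α • X) = matExp (-(α • X) + α • X) := by
    rw [matExp_eq_exp, matExp_eq_exp, matExp_eq_exp]
    exact (Matrix.exp_add_of_commute _ _ ((Commute.refl (α • X)).neg_left)).symm
  have h3 : matExp ((0 : Mat d)) = 1 := by rw [matExp_eq_exp]; exact exp_zero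
  rw [h1, h2, neg_add_cancel, h3]

set_option maxHeartbeats 2000000 in
lemma matExp_tail_bound (B : Mat d) :
    ‖matExp B - 1 - B‖ ≤ ‖B‖ ^ 2 * Real.exp ‖B‖ := by
  rw [matExp_eq_exp]
  set f : ℕ → Mat d := fun n => ((n.factorial : ℝ))⁻¹ • B ^ n with hf
  have hs : Summable f := expSeries_summable' (𝕂 := ℝ) B
  have hsn : Summable fun n => ‖f n‖ := norm_expSeries_summable' (𝕂 := ℝ) B
  have h2 : exp B = (∑ i ∈ Finset.range 2, f i) + ∑' n, f (n + 2) := by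
    rw [exp_eq_tsum ℝ]
    exact (hs.sum_add_tsum_nat_add 2).symm
  have hf0 : (∑ i ∈ Finset.range 2, f i) = 1 + B := by
    simp [hf, Finset.sum_range_succ]
  have hkey : exp B - 1 - B = ∑' n, f (n + 2) := by
    rw [h2, hf0]; abel
  rw [hkey]
  have hbound : ∀ n : ℕ, ‖f (n + 2)‖ ≤ ‖B‖ ^ 2 * (((n.factorial : ℝ))⁻¹ * ‖B‖ ^ n) := by
    intro n
    have h1 : ‖f (n + 2)‖ ≤ ((n + 2).factorial : ℝ)⁻¹ * ‖B‖ ^ (n + 2) := by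
      rw [hf, norm_smul]
      gcongr
      · rw [Real.norm_eq_abs, abs_of_nonneg (by positivity)]
      · exact norm_pow_le' B (by positivity)
    have h2' : ((n + 2).factorial : ℝ)⁻¹ ≤ ((n.factorial : ℝ))⁻¹ := by
      have hp : (0 : ℝ) < n.factorial := by exact_mod_cast n.factorial_pos
      have hle : (n.factorial : ℝ) ≤ ((n + 2).factorial : ℝ) := by
        exact_mod_cast Nat.factorial_le (by omega : n ≤ n + 2)
      exact inv_anti₀ hp hle
    calc ‖f (n + 2)‖ ≤ ((n + 2).factorial : ℝ)⁻¹ * ‖B‖ ^ (n + 2) := h1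
      _ ≤ ((n.factorial : ℝ))⁻¹ * ‖B‖ ^ (n + 2) := by
          apply mul_le_mul_of_nonneg_right h2' (by positivity)
      _ = ‖B‖ ^ 2 * (((n.factorial : ℝ))⁻¹ * ‖B‖ ^ n) := by ring
  have hsum2 : Summable fun n : ℕ => ‖B‖ ^ 2 * (((n.factorial : ℝ))⁻¹ * ‖B‖ ^ n) := by
    apply Summable.mul_left
    have := Real.summable_pow_div_factorial ‖B‖
    simpa [div_eq_mul_inv, mul_comm] using this
  have hsa : Summable (fun n => ‖f (n + 2)‖) := (summable_nat_add_iff 2).mpr hsn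
  have c1 : ‖∑' n, f (n + 2)‖ ≤ ∑' n, ‖f (n + 2)‖ := norm_tsum_le_tsum_norm hsa
  have c2 : ∑' n, ‖f (n + 2)‖ ≤ ∑' n, ‖B‖ ^ 2 * (((n.factorial : ℝ))⁻¹ * ‖B‖ ^ n) := by
    exact Summable.tsum_le_tsum hbound hsa hsum2
  have c3 : ∑' n : ℕ, ‖B‖ ^ 2 * (((n.factorial : ℝ))⁻¹ * ‖B‖ ^ n)
      = ‖B‖ ^ 2 * ∑' n : ℕ, (((n.factorial : ℝ))⁻¹ * ‖B‖ ^ n) := tsum_mul_left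
  have c4 : ∑' n : ℕ, (((n.factorial : ℝ))⁻¹ * ‖B‖ ^ n) = Real.exp ‖B‖ := by
    rw [Real.exp_eq_exp_ℝ, exp_eq_tsum ℝ]
    simp [smul_eq_mul]
  rw [c4] at c3
  linarith [c1, c2, c3]

lemma frob_nonneg (A : Mat d) : 0 ≤ frob A := Real.sqrt_nonneg _

lemma frob_abs_entry_le (A : Mat d) (i j : Fin d) : |A i j| ≤ frob A := by
  rw [frob_eq_norm]; exact abs_entry_le_norm A i j

lemma frob_add_le (A B : Mat d) : frob (A + B) ≤ frob A + frob B := by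
  simp only [frob_eq_norm]; exact norm_add_le A B

lemma frob_sub_le (A B : Mat d) : frob (A - B) ≤ frob A + frob B := by
  simp only [frob_eq_norm]; exact norm_sub_le A B

lemma frob_mul_le (A B : Mat d) : frob (A * B) ≤ frob A * frob B := by
  simp only [frob_eq_norm]; exact Matrix.frobenius_norm_mul A B

lemma frob_smul (a : ℝ) (A : Mat d) : frob (a • A) = |a| * frob A := by
  simp only [frob_eq_norm]
  rw [norm_smul, Real.norm_eq_abs]

lemma frob_transpose (A : Mat d) : frob Aᵀ = frob A := by
  simp only [frob_eq_norm]; exact Matrix.frobenius_norm_transpose A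

lemma frob_conj_ortho {U : Mat d} (hU : Uᵀ * U = 1) (A : Mat d) :
    frob (Uᵀ * A * U) = frob A := by
  simp only [frob_eq_norm]; exact norm_conj_ortho hU A

lemma frob_matExp_tail (B : Mat d) :
    frob (matExp B - 1 - B) ≤ frob B ^ 2 * Real.exp (frob B) := by
  simp only [frob_eq_norm]; exact matExp_tail_bound B

end AuxFrob

lemma frob_tail_small {d : ℕ} {X : Mat d} {α : ℝ}
    (hXf : frob X = 1) (hα : 0 ≤ α) (hα1 : α ≤ 1) :
    frob (matExp (α • X) - 1 - α • X) ≤ α ^ 2 * Real.exp 1 := by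
  have hB : frob (α • X) = α := by rw [frob_smul, hXf, mul_one, abs_of_nonneg hα]
  have h := frob_matExp_tail (α • X)
  rw [hB] at h
  have hexp : Real.exp α ≤ Real.exp 1 := Real.exp_le_exp.mpr hα1
  calc frob (matExp (α • X) - 1 - α • X) ≤ α ^ 2 * Real.exp α := h
    _ ≤ α ^ 2 * Real.exp 1 := mul_le_mul_of_nonneg_left hexp (by positivity)

lemma entry_bound_small {d : ℕ} (A X E : Mat d) {α : ℝ} (hα : 0 ≤ α) (hα1 : α ≤ 1)
    (hXf : frob X = 1) (hRb : frob (E - 1 - α • X) ≤ α ^ 2 * Real.exp 1) (i : Fin d) :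
    |(Eᵀ * A * E - A) i i| ≤
      2 * α * frob A + (2 * Real.exp 1 + (1 + Real.exp 1) ^ 2) * α ^ 2 * frob A := by
  have hAnn : 0 ≤ frob A := frob_nonneg _
  have hDt : (E - 1)ᵀ = Eᵀ - 1 := by
    rw [Matrix.transpose_sub, Matrix.transpose_one]
  have hRt : (E - 1 - α • X)ᵀ = Eᵀ - 1 - α • Xᵀ := by
    rw [Matrix.transpose_sub, Matrix.transpose_sub, Matrix.transpose_one,
      Matrix.transpose_smul]
  have hdecomp : Eᵀ * A * E - A = α • (Xᵀ * A + A * X) +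
      ((E - 1 - α • X)ᵀ * A + A * (E - 1 - α • X) + (E - 1)ᵀ * A * (E - 1)) := by
    rw [hDt, hRt]
    simp only [Matrix.sub_mul, Matrix.mul_sub, Matrix.add_mul, Matrix.mul_add,
      Matrix.smul_mul, Matrix.mul_smul, Matrix.one_mul, Matrix.mul_one, smul_add,
      smul_sub, Matrix.mul_assoc]
    abel
  have hRnn : 0 ≤ frob (E - 1 - α • X) := frob_nonneg _
  have hBfrob : frob (α • X) = α := by rw [frob_smul, hXf, mul_one, abs_of_nonneg hα]
  have hDb : frob (E - 1) ≤ α * (1 + Real.exp 1) := by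
    have hsum : E - 1 = α • X + (E - 1 - α • X) := by abel
    have hα2 : α ^ 2 ≤ α := by nlinarith
    calc frob (E - 1) = frob (α • X + (E - 1 - α • X)) := by rw [← hsum]
      _ ≤ frob (α • X) + frob (E - 1 - α • X) := frob_add_le _ _
      _ ≤ α + α ^ 2 * Real.exp 1 := by rw [hBfrob]; linarith
      _ ≤ α + α * Real.exp 1 := by nlinarith [Real.exp_pos 1]
      _ = α * (1 + Real.exp 1) := by ring
  have hDnn : 0 ≤ frob (E - 1) := frob_nonneg _
  have hSb : frob ((E - 1 - α • X)ᵀ * A + A * (E - 1 - α • X) + (E - 1)ᵀ * A * (E - 1))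
      ≤ (2 * Real.exp 1 + (1 + Real.exp 1) ^ 2) * α ^ 2 * frob A := by
    have h1 : frob ((E - 1 - α • X)ᵀ * A) ≤ frob (E - 1 - α • X) * frob A := by
      calc frob ((E - 1 - α • X)ᵀ * A) ≤ frob ((E - 1 - α • X)ᵀ) * frob A := frob_mul_le _ _
        _ = frob (E - 1 - α • X) * frob A := by rw [frob_transpose]
    have h2 : frob (A * (E - 1 - α • X)) ≤ frob A * frob (E - 1 - α • X) := frob_mul_le _ _
    have h3 : frob ((E - 1)ᵀ * A * (E - 1)) ≤ frob (E - 1) ^ 2 * frob A := by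
      calc frob ((E - 1)ᵀ * A * (E - 1)) ≤ frob ((E - 1)ᵀ * A) * frob (E - 1) :=
            frob_mul_le _ _
        _ ≤ frob ((E - 1)ᵀ) * frob A * frob (E - 1) :=
            mul_le_mul_of_nonneg_right (frob_mul_le _ _) hDnn
        _ = frob (E - 1) ^ 2 * frob A := by rw [frob_transpose]; ring
    have h4 : frob ((E - 1 - α • X)ᵀ * A + A * (E - 1 - α • X) + (E - 1)ᵀ * A * (E - 1))
        ≤ frob ((E - 1 - α • X)ᵀ * A) + frob (A * (E - 1 - α • X))
          + frob ((E - 1)ᵀ * A * (E - 1)) := by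
      calc frob ((E - 1 - α • X)ᵀ * A + A * (E - 1 - α • X) + (E - 1)ᵀ * A * (E - 1))
          ≤ frob ((E - 1 - α • X)ᵀ * A + A * (E - 1 - α • X))
            + frob ((E - 1)ᵀ * A * (E - 1)) := frob_add_le _ _
        _ ≤ _ := by linarith [frob_add_le ((E - 1 - α • X)ᵀ * A) (A * (E - 1 - α • X))]
    have hD2 : frob (E - 1) ^ 2 ≤ (1 + Real.exp 1) ^ 2 * α ^ 2 := by nlinarith
    nlinarith [mul_le_mul_of_nonneg_right hRb hAnn, mul_le_mul_of_nonneg_right hD2 hAnn]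
  have hlin : |(Xᵀ * A + A * X) i i| ≤ 2 * frob A := by
    calc |(Xᵀ * A + A * X) i i| ≤ frob (Xᵀ * A + A * X) := frob_abs_entry_le _ i i
      _ ≤ frob (Xᵀ * A) + frob (A * X) := frob_add_le _ _
      _ ≤ frob Xᵀ * frob A + frob A * frob X := by
          linarith [frob_mul_le Xᵀ A, frob_mul_le A X]
      _ = 2 * frob A := by rw [frob_transpose, hXf]; ring
  have hentry : (Eᵀ * A * E - A) i i = α * ((Xᵀ * A + A * X) i i) +
      (((E - 1 - α • X)ᵀ * A + A * (E - 1 - α • X) + (E - 1)ᵀ * A * (E - 1) : Mat d)) i i := by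
    rw [hdecomp]
    simp [Matrix.add_apply, Matrix.smul_apply, smul_eq_mul]
    ring
  have hSi := le_trans
    (frob_abs_entry_le
      (((E - 1 - α • X)ᵀ * A + A * (E - 1 - α • X) + (E - 1)ᵀ * A * (E - 1) : Mat d)) i i)
    hSb
  rw [hentry]
  have hfirst : |α * ((Xᵀ * A + A * X) i i)| ≤ α * (2 * frob A) := by
    rw [abs_mul, abs_of_nonneg hα]
    exact mul_le_mul_of_nonneg_left hlin hα
  have habs := abs_add_le (α * ((Xᵀ * A + A * X) i i))
    ((((E - 1 - α • X)ᵀ * A + A * (E - 1 - α • X) + (E - 1)ᵀ * A * (E - 1) : Mat d)) i i)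
  linarith

lemma entry_bound_large {d : ℕ} (A E : Mat d) (hE : Eᵀ * E = 1) (i : Fin d) :
    |(Eᵀ * A * E - A) i i| ≤ 2 * frob A := by
  have hconjE : frob (Eᵀ * A * E) = frob A := frob_conj_ortho hE A
  calc |(Eᵀ * A * E - A) i i| ≤ frob (Eᵀ * A * E - A) := frob_abs_entry_le _ i i
    _ ≤ frob (Eᵀ * A * E) + frob A := frob_sub_le _ _
    _ = 2 * frob A := by rw [hconjE]; ring

lemma split_entry {d : ℕ} (Mo Wo U₀ E : Mat d) (σ : ℝ) (i : Fin d) :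
    ((U₀ * E)ᵀ * (Mo + σ • Wo) * (U₀ * E)) i i - (U₀ᵀ * Mo * U₀) i i
      = (Eᵀ * (U₀ᵀ * Mo * U₀) * E - U₀ᵀ * Mo * U₀) i i
        + σ * ((U₀ * E)ᵀ * Wo * (U₀ * E)) i i := by
  have hmat : (U₀ * E)ᵀ * (Mo + σ • Wo) * (U₀ * E)
      = Eᵀ * (U₀ᵀ * Mo * U₀) * E + σ • ((U₀ * E)ᵀ * Wo * (U₀ * E)) := by
    simp only [Matrix.transpose_mul, Matrix.mul_add, Matrix.add_mul, Matrix.mul_smul,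
      Matrix.smul_mul, Matrix.mul_assoc]
  rw [hmat]
  simp [Matrix.add_apply, Matrix.sub_apply, Matrix.smul_apply, smul_eq_mul]
  ring

lemma key_bound {d : ℕ} (Mo Wo U₀ X : Mat d) (σ α : ℝ) (hσ : 0 < σ) (hα : 0 ≤ α)
    (hU₀ : U₀ᵀ * U₀ = 1) (hX : IsSkew X) (hXf : frob X = 1) (i : Fin d) :
    |((U₀ * matExp (α • X))ᵀ * (Mo + σ • Wo) * (U₀ * matExp (α • X))) i i
        - (U₀ᵀ * Mo * U₀) i i| ≤
      2 * α * frob Mo + σ * frob Wo +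
        (2 + 2 * Real.exp 1 + (1 + Real.exp 1) ^ 2) * (frob Mo + 1) * α ^ 2 := by
  suffices h : ∀ E : Mat d, Eᵀ * E = 1 →
      (α ≤ 1 → frob (E - 1 - α • X) ≤ α ^ 2 * Real.exp 1) →
      |((U₀ * E)ᵀ * (Mo + σ • Wo) * (U₀ * E)) i i - (U₀ᵀ * Mo * U₀) i i| ≤
        2 * α * frob Mo + σ * frob Wo +
          (2 + 2 * Real.exp 1 + (1 + Real.exp 1) ^ 2) * (frob Mo + 1) * α ^ 2 by
    exact h (matExp (α • X)) (matExp_ortho hX α)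
      (fun hα1 => frob_tail_small hXf hα hα1)
  intro E hEo hEt
  have hUE : (U₀ * E)ᵀ * (U₀ * E) = 1 := by
    rw [Matrix.transpose_mul]
    calc Eᵀ * U₀ᵀ * (U₀ * E) = Eᵀ * (U₀ᵀ * U₀ * E) := by simp only [Matrix.mul_assoc]
      _ = 1 := by rw [hU₀, Matrix.one_mul, hEo]
  have hfrobA : frob (U₀ᵀ * Mo * U₀) = frob Mo := frob_conj_ortho hU₀ Mo
  have hfrobG : frob ((U₀ * E)ᵀ * Wo * (U₀ * E)) = frob Wo := frob_conj_ortho hUE Wo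
  have hMnn : 0 ≤ frob Mo := frob_nonneg _
  have hWnn : 0 ≤ frob Wo := frob_nonneg _
  have hGi : |σ * ((U₀ * E)ᵀ * Wo * (U₀ * E)) i i| ≤ σ * frob Wo := by
    rw [abs_mul, abs_of_pos hσ, ← hfrobG]
    exact mul_le_mul_of_nonneg_left (frob_abs_entry_le _ i i) hσ.le
  rw [split_entry]
  have habs := abs_add_le ((Eᵀ * (U₀ᵀ * Mo * U₀) * E - U₀ᵀ * Mo * U₀) i i)
    (σ * ((U₀ * E)ᵀ * Wo * (U₀ * E)) i i)
  have hepos : (0:ℝ) < Real.exp 1 := Real.exp_pos 1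
  rcases le_or_gt α 1 with hα1 | hα1
  · have hsm := entry_bound_small (U₀ᵀ * Mo * U₀) X E hα hα1 hXf (hEt hα1) i
    rw [hfrobA] at hsm
    have hmono : (2 * Real.exp 1 + (1 + Real.exp 1) ^ 2) * α ^ 2 * frob Mo ≤
        (2 + 2 * Real.exp 1 + (1 + Real.exp 1) ^ 2) * (frob Mo + 1) * α ^ 2 := by
      nlinarith [sq_nonneg α, sq_nonneg (1 + Real.exp 1)]
    linarith
  · have hlg := entry_bound_large (U₀ᵀ * Mo * U₀) E hEo i
    rw [hfrobA] at hlg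
    have hα2 : (1:ℝ) ≤ α ^ 2 := by nlinarith
    have hK2 : (2:ℝ) ≤ 2 + 2 * Real.exp 1 + (1 + Real.exp 1) ^ 2 := by
      have := sq_nonneg (1 + Real.exp 1); linarith
    have hbig : 2 * frob Mo ≤
        (2 + 2 * Real.exp 1 + (1 + Real.exp 1) ^ 2) * (frob Mo + 1) * α ^ 2 := by
      calc 2 * frob Mo ≤ 2 * (frob Mo + 1) := by linarith
        _ ≤ (2 + 2 * Real.exp 1 + (1 + Real.exp 1) ^ 2) * (frob Mo + 1) :=
            mul_le_mul_of_nonneg_right hK2 (by linarith)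
        _ = (2 + 2 * Real.exp 1 + (1 + Real.exp 1) ^ 2) * (frob Mo + 1) * 1 := by ring
        _ ≤ (2 + 2 * Real.exp 1 + (1 + Real.exp 1) ^ 2) * (frob Mo + 1) * α ^ 2 :=
            mul_le_mul_of_nonneg_left hα2
              (mul_nonneg (by positivity) (by linarith))
    have hnn : 0 ≤ 2 * α * frob Mo := by positivity
    linarith

set_option maxHeartbeats 1000000 in
/-- perturbation bound on the estimated joint eigenvalues
(the diagonal entries of `Uᵀ M̂ₙ U` with `U = U₀ exp(αX)`). -/
theorem eigenvalue_estimation_bound {d N : ℕ} (V : Mat d) (hV : IsUnit V)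
    (Λ : Fin N → Fin d → ℝ) (M : Fin N → Mat d)
    (hM : ∀ n, M n = V * Matrix.diagonal (Λ n) * V⁻¹) :
    ∃ C > (0 : ℝ), ∀ σ : ℝ, 0 < σ → ∀ W : Fin N → Mat d,
      ∀ U₀ X : Mat d, ∀ α : ℝ,
        ExactTriang U₀ M → IsSkew X → frob X = 1 → 0 ≤ α →
        ∀ n i,
          |((U₀ * matExp (α • X))ᵀ * (M n + σ • W n) * (U₀ * matExp (α • X))) i i -
              (U₀ᵀ * M n * U₀) i i| ≤
            2 * α * frob (M n) + σ * frob (W n) + C * α ^ 2 := by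
  classical
  have hF : (0:ℝ) ≤ ∑ k, frob (M k) := Finset.sum_nonneg fun _ _ => frob_nonneg _
  have hKp : (0:ℝ) < 2 + 2 * Real.exp 1 + (1 + Real.exp 1) ^ 2 := by positivity
  refine ⟨(2 + 2 * Real.exp 1 + (1 + Real.exp 1) ^ 2) * ((∑ k, frob (M k)) + 1),
    mul_pos hKp (by linarith), ?_⟩
  intro σ hσ W U₀ X α hTri hX hXf hα n i
  obtain ⟨hU₀, -⟩ := hTri
  have hkey := key_bound (M n) (W n) U₀ X σ α hσ hα hU₀ hX hXf i
  have hMF : frob (M n) ≤ ∑ k, frob (M k) :=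
    Finset.single_le_sum (f := fun k => frob (M k)) (fun _ _ => frob_nonneg _)
      (Finset.mem_univ n)
  have hKpos : (0:ℝ) < 2 + 2 * Real.exp 1 + (1 + Real.exp 1) ^ 2 := by positivity
  have hmono : (2 + 2 * Real.exp 1 + (1 + Real.exp 1) ^ 2) * (frob (M n) + 1) * α ^ 2 ≤
      (2 + 2 * Real.exp 1 + (1 + Real.exp 1) ^ 2) * ((∑ k, frob (M k)) + 1) * α ^ 2 := by
    have h1 : frob (M n) + 1 ≤ (∑ k, frob (M k)) + 1 := by linarith
    have := mul_le_mul_of_nonneg_left h1 hKpos.le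
    exact mul_le_mul_of_nonneg_right this (sq_nonneg α)
  linarith
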